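/- For every quantitative definite clause program P, every i ∈ ℕ and every atom a, the chain value A_i a is either 0 or equals the product of some finite list of factors of clauses of P. -/

import Mathlib

/-- A quantitative definite clause: a head atom, a list of body atoms,
and a numerical factor. -/
structure QClause (α : Type*) where
  head : α
  body : List α
  factor : ℝ

variable {α : Type*}

/-- The minimum of the values of an interpretation over a list of atoms,
with the empty list yielding 1. -/
def bodyMin (I : α → ℝ) (l : List α) : ℝ := (l.map I).foldr min 1

/-- A quantitative definite clause program: a finite set of clauses whose
factors lie in (0,1]. -/
def QProgram (P : Set (QClause α)) : Prop :=
  P.Finite ∧ ∀ c ∈ P, 0 < c.factor ∧ c.factor ≤ 1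

/-- An interpretation assigns to each atom a value in [0,1]. -/
def IsInterp (I : α → ℝ) : Prop := ∀ a, 0 ≤ I a ∧ I a ≤ 1

/-- An interpretation is a model of `P` iff it is an interpretation and for
every clause `(h, [b₁,…,b_k], f)` of `P`, `I h ≥ f * min {I b₁, …, I b_k}`. -/
def IsModel (P : Set (QClause α)) (I : α → ℝ) : Prop :=
  IsInterp I ∧ ∀ c ∈ P, c.factor * bodyMin I c.body ≤ I c.head

/-- The `P`-chain: `A₀ a = 0` and
`A_{i+1} a = sup { f * min {A_i b₁, …, A_i b_k} : (a,[b₁,…,b_k],f) ∈ P }`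
(in ℝ, `sSup ∅ = 0`). -/
noncomputable def chain (P : Set (QClause α)) : ℕ → α → ℝ
  | 0, _ => 0
  | i + 1, a =>
      sSup {x | ∃ c ∈ P, c.head = a ∧ x = c.factor * bodyMin (chain P i) c.body}


lemma aux_foldr_min (l : List ℝ) : l.foldr min 1 = 1 ∨ l.foldr min 1 ∈ l := by
  induction l with
  | nil => left; rfl
  | cons x xs ih =>
    rcases min_choice x (xs.foldr min 1) with h | h
    · right; simp only [List.foldr_cons, h]; exact List.mem_cons_self
    · rcases ih with h1 | h1
      · left; simp only [List.foldr_cons]; rw [h, h1]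
      · right; simp only [List.foldr_cons, h]; exact List.mem_cons_of_mem _ h1

/-- Every chain value is either 0 or a product of a finite list of factors of
clauses of `P`. -/
theorem stmt_2 (P : Set (QClause α)) (hP : QProgram P) (i : ℕ) (a : α) :
    chain P i a = 0 ∨
      ∃ l : List ℝ, (∀ f ∈ l, ∃ c ∈ P, c.factor = f) ∧ chain P i a = l.prod := by
  induction i generalizing a with
  | zero => left; rfl
  | succ i ih =>
    have hchain : chain P (i + 1) a =
        sSup {x | ∃ c ∈ P, c.head = a ∧ x = c.factor * bodyMin (chain P i) c.body} := rfl
    set S := {x | ∃ c ∈ P, c.head = a ∧ x = c.factor * bodyMin (chain P i) c.body} with hSdef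
    have hfin : S.Finite := by
      have hsub : S ⊆ (fun c : QClause α => c.factor * bodyMin (chain P i) c.body) '' P := by
        rintro x ⟨c, hc, -, rfl⟩; exact ⟨c, hc, rfl⟩
      exact (hP.1.image _).subset hsub
    rcases S.eq_empty_or_nonempty with he | hne
    · left; rw [hchain, he]; exact Real.sSup_empty
    · have hmem : sSup S ∈ S := hne.csSup_mem hfin
      obtain ⟨c, hc, -, hx⟩ := hmem
      rcases aux_foldr_min (c.body.map (chain P i)) with h1 | h1
      · right
        refine ⟨[c.factor], ?_, ?_⟩
        · rintro f hf; simp only [List.mem_singleton] at hf; exact ⟨c, hc, hf.symm⟩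
        · rw [hchain, hx]; unfold bodyMin; rw [h1]; simp
      · obtain ⟨b, hbmem, hbv⟩ := List.mem_map.mp h1
        rcases ih b with h0 | ⟨l, hl, hv⟩
        · left; rw [hchain, hx]; unfold bodyMin; rw [← hbv, h0, mul_zero]
        · right
          refine ⟨c.factor :: l, ?_, ?_⟩
          · rintro f hf
            rcases List.mem_cons.mp hf with rfl | hf
            · exact ⟨c, hc, rfl⟩
            · exact hl f hf
          · rw [hchain, hx]; unfold bodyMin; rw [← hbv, hv, List.prod_cons]
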